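/- Let V and H be real Hilbert spaces and ι : V → H a compact linear operator. Let B : V × V → ℝ be a bounded symmetric bilinear form for which there exist constants α > 0 and λ ∈ ℝ such that the Gårding inequality B(v,v) ≥ α‖v‖²_V − λ‖ιv‖²_H holds for all v ∈ V, and suppose moreover that B(w,w) > 0 for every w ∈ V with w ≠ 0. Then B is inf-sup stable: there exists a constant α₁ > 0 such that inf over w ∈ V \ {0} of sup over v ∈ V \ {0} of |B(v,w)| / (‖v‖_V ‖w‖_V) is at least α₁. -/

import Mathlib

open InnerProductSpace Filter

set_option maxHeartbeats 1000000 in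
/-- Let `V`, `H` be real Hilbert spaces, `ι : V → H` a compact linear
operator, and `B` a bounded symmetric bilinear form on `V` satisfying a Gårding inequality
`B(v,v) ≥ α‖v‖² − λ‖ιv‖²` and strict positivity `B(w,w) > 0` for `w ≠ 0`. Then `B` is
inf-sup stable: there exists `α₁ > 0` with
`inf_{w ≠ 0} sup_{v ≠ 0} |B(v,w)| / (‖v‖‖w‖) ≥ α₁`. -/
theorem stmt0 {V H : Type*}
    [NormedAddCommGroup V] [InnerProductSpace ℝ V] [CompleteSpace V]
    [NormedAddCommGroup H] [InnerProductSpace ℝ H] [CompleteSpace H]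
    (ι : V →L[ℝ] H) (hι : IsCompactOperator (⇑ι))
    (B : LinearMap.BilinForm ℝ V)
    (CB : ℝ) (hBbdd : ∀ v w : V, |B v w| ≤ CB * ‖v‖ * ‖w‖)
    (hBsymm : ∀ v w : V, B v w = B w v)
    (α lam : ℝ) (hα : 0 < α)
    (hGarding : ∀ v : V, α * ‖v‖ ^ 2 - lam * ‖ι v‖ ^ 2 ≤ B v v)
    (hpos : ∀ w : V, w ≠ 0 → 0 < B w w) :
    ∃ α₁ : ℝ, 0 < α₁ ∧ ∀ w : V, w ≠ 0 →
      α₁ ≤ ⨆ v : {v : V // v ≠ 0}, |B v.1 w| / (‖v.1‖ * ‖w‖) := by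
  -- Riesz representation of B : ⟪a v, w⟫ = B v w
  obtain ⟨a, ha, hcont⟩ : ∃ a : V → V, (∀ v w : V, ⟪a v, w⟫_ℝ = B v w) ∧ Continuous a := by
    refine ⟨fun v => (toDual ℝ V).symm
      (LinearMap.mkContinuous₂ B CB (fun v w => by simpa using hBbdd v w) v), ?_, ?_⟩
    · intro v w
      rw [toDual_symm_apply, LinearMap.mkContinuous₂_apply]
    · exact ((toDual ℝ V).symm.continuous).comp
        (LinearMap.mkContinuous₂ B CB (fun v w => by simpa using hBbdd v w)).continuous
  have hasub : ∀ x y : V, a (x - y) = a x - a y := by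
    intro x y
    apply ext_inner_right ℝ
    intro w
    rw [inner_sub_left, ha, ha, ha, map_sub, LinearMap.sub_apply]
  have ha0 : a 0 = 0 := by
    have := hasub 0 0; simpa using this
  have hasmul : ∀ (c : ℝ) (x : V), a (c • x) = c • a x := by
    intro c x
    apply ext_inner_right ℝ
    intro w
    rw [real_inner_smul_left, ha, ha, map_smul, LinearMap.smul_apply, smul_eq_mul]
  -- the compact operator  k = lam • ι* ι
  obtain ⟨k, hkin, hkc⟩ : ∃ k : V →L[ℝ] V,
      (∀ v w : V, ⟪k v, w⟫_ℝ = lam * ⟪ι v, ι w⟫_ℝ) ∧ IsCompactOperator (⇑k) := by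
    refine ⟨lam • ((ContinuousLinearMap.adjoint ι).comp ι), ?_, ?_⟩
    · intro v w
      simp [ContinuousLinearMap.adjoint_inner_left, real_inner_smul_left]
    · have h1 : IsCompactOperator (⇑((ContinuousLinearMap.adjoint ι).comp ι)) :=
        hι.continuous_comp (ContinuousLinearMap.adjoint ι).continuous
      have h2 : (⇑(lam • ((ContinuousLinearMap.adjoint ι).comp ι)))
          = lam • (⇑((ContinuousLinearMap.adjoint ι).comp ι)) := by
        funext v; simp
      rw [h2]; exact h1.smul lam
  -- Gårding: T = a + k is bounded below by α
  have hTlow : ∀ v : V, α * ‖v‖ ≤ ‖a v + k v‖ := by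
    intro v
    rcases eq_or_ne v 0 with rfl | hv
    · simp [ha0]
    · have hv' : 0 < ‖v‖ := norm_pos_iff.mpr hv
      have h1 : α * ‖v‖ ^ 2 ≤ ⟪a v + k v, v⟫_ℝ := by
        rw [inner_add_left, ha, hkin, real_inner_self_eq_norm_sq]
        have := hGarding v; linarith
      have h2 : ⟪a v + k v, v⟫_ℝ ≤ ‖a v + k v‖ * ‖v‖ := real_inner_le_norm _ _
      have h3 : (α * ‖v‖) * ‖v‖ ≤ ‖a v + k v‖ * ‖v‖ := by nlinarith
      exact le_of_mul_le_mul_right h3 hv'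
  -- Main claim: a is bounded below
  have key : ∃ c : ℝ, 0 < c ∧ ∀ v : V, c * ‖v‖ ≤ ‖a v‖ := by
    by_contra hcon
    push_neg at hcon
    have hseq : ∀ n : ℕ, ∃ v : V, ‖a v‖ < ((n : ℝ) + 1)⁻¹ * ‖v‖ := by
      intro n
      obtain ⟨v, hv⟩ := hcon (((n : ℝ) + 1)⁻¹) (by positivity)
      exact ⟨v, hv⟩
    choose v hv using hseq
    have hvne : ∀ n, v n ≠ 0 := by
      intro n h
      have := hv n
      rw [h] at this
      simp [ha0] at this
    set u : ℕ → V := fun n => ‖v n‖⁻¹ • v n with hu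
    have hu1 : ∀ n, ‖u n‖ = 1 := fun n => norm_smul_inv_norm (hvne n)
    have hau : ∀ n, ‖a (u n)‖ ≤ ((n : ℝ) + 1)⁻¹ := by
      intro n
      have hvp : 0 < ‖v n‖ := norm_pos_iff.mpr (hvne n)
      have : a (u n) = ‖v n‖⁻¹ • a (v n) := hasmul _ _
      rw [this, norm_smul, norm_inv, norm_norm]
      have h1 : ‖v n‖⁻¹ * ‖a (v n)‖ ≤ ‖v n‖⁻¹ * (((n : ℝ) + 1)⁻¹ * ‖v n‖) :=
        mul_le_mul_of_nonneg_left (hv n).le (by positivity)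
      calc ‖v n‖⁻¹ * ‖a (v n)‖ ≤ ‖v n‖⁻¹ * (((n : ℝ) + 1)⁻¹ * ‖v n‖) := h1
        _ = ((n : ℝ) + 1)⁻¹ := by field_simp
    have hto0 : Tendsto (fun n => a (u n)) atTop (nhds 0) := by
      rw [tendsto_zero_iff_norm_tendsto_zero]
      apply squeeze_zero (fun n => norm_nonneg _) hau
      simpa [one_div] using tendsto_one_div_add_atTop_nhds_zero_nat (𝕜 := ℝ)
    obtain ⟨M, hMc, hMsub⟩ := hkc.image_subset_compact_of_bounded
      (Metric.isBounded_closedBall (x := (0 : V)) (r := 1))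
    have hmem : ∀ n, k (u n) ∈ M := by
      intro n
      exact hMsub ⟨u n, by simp [Metric.mem_closedBall, dist_zero_right, (hu1 n).le], rfl⟩
    obtain ⟨y, hyM, φ, hφ, hky⟩ := hMc.tendsto_subseq hmem
    have hto0' : Tendsto (fun n => a (u (φ n))) atTop (nhds 0) :=
      hto0.comp hφ.tendsto_atTop
    have hT : Tendsto (fun n => a (u (φ n)) + k (u (φ n))) atTop (nhds (0 + y)) :=
      hto0'.add hky
    have hTc : CauchySeq (fun n => a (u (φ n)) + k (u (φ n))) := hT.cauchySeq
    have huC : CauchySeq (fun n => u (φ n)) := by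
      rw [Metric.cauchySeq_iff] at hTc ⊢
      intro ε hε
      obtain ⟨N, hN⟩ := hTc (α * ε) (by positivity)
      refine ⟨N, fun m hm n hn => ?_⟩
      have h1 := hN m hm n hn
      rw [dist_eq_norm] at h1 ⊢
      have heq : (a (u (φ m)) + k (u (φ m))) - (a (u (φ n)) + k (u (φ n))) =
          a (u (φ m) - u (φ n)) + k (u (φ m) - u (φ n)) := by
        rw [hasub, map_sub]; abel
      have h2 := hTlow (u (φ m) - u (φ n))
      rw [← heq] at h2
      have h3 : α * ‖u (φ m) - u (φ n)‖ < α * ε := lt_of_le_of_lt h2 h1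
      exact lt_of_mul_lt_mul_left h3 hα.le
    obtain ⟨x, hx⟩ := cauchySeq_tendsto_of_complete huC
    have hxnorm : ‖x‖ = 1 := by
      refine tendsto_nhds_unique hx.norm ?_
      simp only [hu1]
      exact tendsto_const_nhds
    have hxne : x ≠ 0 := by
      intro h; rw [h] at hxnorm; simp at hxnorm
    have hax : a x = 0 := by
      refine tendsto_nhds_unique ?_ hto0'
      exact (hcont.tendsto x).comp hx
    have hBg := hpos x hxne
    rw [← ha x x, hax, inner_zero_left] at hBg
    exact lt_irrefl _ hBg
  -- Conclude inf-sup stability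
  obtain ⟨c, hcpos, hcle⟩ := key
  refine ⟨c, hcpos, fun w hw => ?_⟩
  have hwpos : 0 < ‖w‖ := norm_pos_iff.mpr hw
  have hawpos : 0 < ‖a w‖ := lt_of_lt_of_le (by positivity) (hcle w)
  have hawne : a w ≠ 0 := norm_pos_iff.mp hawpos
  have hbdd : BddAbove (Set.range fun v : {v : V // v ≠ 0} => |B v.1 w| / (‖v.1‖ * ‖w‖)) := by
    refine ⟨CB, ?_⟩
    rintro r ⟨v, rfl⟩
    have hvp : 0 < ‖v.1‖ := norm_pos_iff.mpr v.2
    rw [div_le_iff₀ (by positivity)]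
    calc |B v.1 w| ≤ CB * ‖v.1‖ * ‖w‖ := hBbdd _ _
      _ = CB * (‖v.1‖ * ‖w‖) := by ring
  have hle := le_ciSup hbdd (⟨a w, hawne⟩ : {v : V // v ≠ 0})
  refine le_trans ?_ hle
  have hBv : B (a w) w = ‖a w‖ ^ 2 := by
    rw [hBsymm (a w) w, ← ha w (a w), real_inner_self_eq_norm_sq]
  simp only [hBv]
  rw [abs_of_nonneg (sq_nonneg _), le_div_iff₀ (by positivity)]
  nlinarith [hcle w]
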